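/- Let Z be a multiaffine real polynomial and e,f,g distinct indices. Viewing ΔZ{e,f} = A y_g² + B y_g + C as a quadratic in y_g, the middle coefficient is B = Z_e^{fg} Z_{fg}^e + Z_f^{eg} Z_{eg}^f − Z_g^{ef} Z_{ef}^g − Z_{efg} Z^{efg}. -/

import Mathlib

open MvPolynomial

/-- The deletion `Z^e`: the polynomial `Z` with `y_e` set to `0`. -/
noncomputable def del {m : ℕ} (e : Fin m) (Z : MvPolynomial (Fin m) ℝ) : MvPolynomial (Fin m) ℝ :=
  aeval (fun i => if i = e then (0 : MvPolynomial (Fin m) ℝ) else X i) Z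

/-- Multiaffine: every variable occurs to at most the first power. -/
def Multiaffine {m : ℕ} (Z : MvPolynomial (Fin m) ℝ) : Prop :=
  ∀ e : Fin m, Z.degreeOf e ≤ 1

/-- The Rayleigh difference `ΔZ{e,f} = Z_e Z_f - Z_{ef} Z`. -/
noncomputable def Ray {m : ℕ} (e f : Fin m) (Z : MvPolynomial (Fin m) ℝ) : MvPolynomial (Fin m) ℝ :=
  pderiv e Z * pderiv f Z - pderiv f (pderiv e Z) * Z

namespace RayAux

variable {m : ℕ}

lemma degreeOf_monomial_le (i : Fin m) (s : Fin m →₀ ℕ) (a : ℝ) :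
    degreeOf i (monomial s a : MvPolynomial (Fin m) ℝ) ≤ s i := by
  classical
  rw [degreeOf_eq_sup]
  apply Finset.sup_le
  intro b hb
  rw [support_monomial] at hb
  split at hb
  · simp at hb
  · simp only [Finset.mem_singleton] at hb
    subst hb; exact le_rfl

lemma del_monomial (g : Fin m) (s : Fin m →₀ ℕ) (a : ℝ) :
    del g (monomial s a) = if s g = 0 then monomial s a else 0 := by
  classical
  rw [del, aeval_monomial]
  split_ifs with h
  · rw [monomial_eq]
    congr 1
    apply Finsupp.prod_congr
    intro i hi
    rw [if_neg]
    rintro rfl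
    exact (Finsupp.mem_support_iff.mp hi) h
  · rw [Finsupp.prod, Finset.prod_eq_zero (Finsupp.mem_support_iff.mpr h)]
    · ring
    · simp [h, zero_pow h]

lemma del_eq_self {g : Fin m} {W : MvPolynomial (Fin m) ℝ} (h : degreeOf g W = 0) :
    del g W = W := by
  conv_lhs => rw [as_sum W]
  rw [del, map_sum]
  conv_rhs => rw [as_sum W]
  refine Finset.sum_congr rfl fun s hs => ?_
  have hsg : s g = 0 := le_zero_iff.mp (h ▸ monomial_le_degreeOf g hs)
  have := del_monomial g s (coeff s W)
  rw [del] at this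
  rw [this, if_pos hsg]

lemma degreeOf_del_self (g : Fin m) (W : MvPolynomial (Fin m) ℝ) :
    degreeOf g (del g W) = 0 := by
  refine le_antisymm ?_ (Nat.zero_le _)
  conv_lhs => rw [as_sum W]
  rw [del, map_sum]
  refine le_trans (degreeOf_sum_le _ _ _) ?_
  rw [Finset.sup_le_iff]
  intro s hs
  have := del_monomial g s (coeff s W)
  rw [del] at this
  rw [this]
  split_ifs with h
  · exact le_trans (degreeOf_monomial_le _ _ _) (le_of_eq h)
  · simp

lemma degreeOf_del_le (e g : Fin m) (W : MvPolynomial (Fin m) ℝ) :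
    degreeOf e (del g W) ≤ degreeOf e W := by
  conv_lhs => rw [as_sum W]
  rw [del, map_sum]
  refine le_trans (degreeOf_sum_le _ _ _) ?_
  rw [Finset.sup_le_iff]
  intro s hs
  have := del_monomial g s (coeff s W)
  rw [del] at this
  rw [this]
  split_ifs with h
  · exact le_trans (degreeOf_monomial_le _ _ _) (monomial_le_degreeOf e hs)
  · simp

lemma degreeOf_pderiv_le (e g : Fin m) (W : MvPolynomial (Fin m) ℝ) :
    degreeOf e (pderiv g W) ≤ degreeOf e W := by
  conv_lhs => rw [as_sum W]
  rw [map_sum]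
  refine le_trans (degreeOf_sum_le _ _ _) ?_
  rw [Finset.sup_le_iff]
  intro s hs
  rw [pderiv_monomial]
  refine le_trans (degreeOf_monomial_le _ _ _) (le_trans ?_ (monomial_le_degreeOf e hs))
  rw [Finsupp.tsub_apply]
  exact Nat.sub_le _ _

lemma degreeOf_pderiv_self {g : Fin m} {W : MvPolynomial (Fin m) ℝ}
    (h : degreeOf g W ≤ 1) : degreeOf g (pderiv g W) = 0 := by
  refine le_antisymm ?_ (Nat.zero_le _)
  conv_lhs => rw [as_sum W]
  rw [map_sum]
  refine le_trans (degreeOf_sum_le _ _ _) ?_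
  rw [Finset.sup_le_iff]
  intro s hs
  rw [pderiv_monomial]
  refine le_trans (degreeOf_monomial_le _ _ _) ?_
  rw [Finsupp.tsub_apply, Finsupp.single_eq_same]
  have : s g ≤ 1 := le_trans (monomial_le_degreeOf g hs) h
  omega

lemma pderiv_eq_zero {g : Fin m} {W : MvPolynomial (Fin m) ℝ}
    (h : degreeOf g W = 0) : pderiv g W = 0 := by
  conv_lhs => rw [as_sum W]
  rw [map_sum]
  refine Finset.sum_eq_zero fun s hs => ?_
  have hsg : s g = 0 := le_zero_iff.mp (h ▸ monomial_le_degreeOf g hs)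
  rw [pderiv_monomial, hsg]
  simp

lemma del_add (g : Fin m) (p q : MvPolynomial (Fin m) ℝ) :
    del g (p + q) = del g p + del g q := map_add (aeval _) p q

lemma del_mul (g : Fin m) (p q : MvPolynomial (Fin m) ℝ) :
    del g (p * q) = del g p * del g q := map_mul (aeval _) p q

lemma del_X_self (g : Fin m) : del g (X g : MvPolynomial (Fin m) ℝ) = 0 := by
  rw [del, aeval_X, if_pos rfl]

lemma del_X_of_ne {i g : Fin m} (h : i ≠ g) : del g (X i : MvPolynomial (Fin m) ℝ) = X i := by
  rw [del, aeval_X, if_neg h]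

lemma decomp {g : Fin m} {W : MvPolynomial (Fin m) ℝ} (h : degreeOf g W ≤ 1) :
    W = del g W + X g * pderiv g W := by
  classical
  conv_lhs => rw [as_sum W]
  rw [del]
  conv_rhs => rw [as_sum W]
  rw [map_sum, map_sum, Finset.mul_sum, ← Finset.sum_add_distrib]
  refine Finset.sum_congr rfl fun s hs => ?_
  have hdm := del_monomial g s (coeff s W)
  rw [del] at hdm
  rw [hdm, pderiv_monomial]
  have hsg : s g ≤ 1 := le_trans (monomial_le_degreeOf g hs) h
  rcases Nat.lt_or_ge (s g) 1 with h1 | h1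
  · have h0 : s g = 0 := by omega
    rw [if_pos h0, h0]
    push_cast
    simp
  · have h0 : s g = 1 := le_antisymm hsg h1
    rw [if_neg (by omega), h0]
    push_cast
    have hfs : Finsupp.single g 1 + (s - Finsupp.single g 1) = s := by
      ext i
      rcases eq_or_ne i g with rfl | hig
      · simp [h0]
      · simp [Finsupp.single_eq_of_ne' (Ne.symm hig), Finsupp.tsub_apply]
    rw [mul_one, zero_add, ← pow_one (X g : MvPolynomial (Fin m) ℝ), ← monomial_single_add, hfs]

lemma deg0_add {g : Fin m} {p q : MvPolynomial (Fin m) ℝ}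
    (h1 : degreeOf g p = 0) (h2 : degreeOf g q = 0) : degreeOf g (p + q) = 0 :=
  Nat.le_zero.mp (le_trans (degreeOf_add_le _ _ _) (by simp [h1, h2]))

lemma deg0_mul {g : Fin m} {p q : MvPolynomial (Fin m) ℝ}
    (h1 : degreeOf g p = 0) (h2 : degreeOf g q = 0) : degreeOf g (p * q) = 0 :=
  Nat.le_zero.mp (le_trans (degreeOf_mul_le _ _ _) (by simp [h1, h2]))

lemma deg0_sub {g : Fin m} {p q : MvPolynomial (Fin m) ℝ}
    (h1 : degreeOf g p = 0) (h2 : degreeOf g q = 0) : degreeOf g (p - q) = 0 := by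
  rw [sub_eq_add_neg]
  exact deg0_add h1 (by rw [degreeOf_neg]; exact h2)

lemma deg0_X {i g : Fin m} (h : i ≠ g) : degreeOf g (X i : MvPolynomial (Fin m) ℝ) = 0 := by
  rw [degreeOf_X]
  simp [Ne.symm h]

set_option maxHeartbeats 2000000 in
lemma key (e f g : Fin m) (hef : e ≠ f) (heg : e ≠ g) (hfg : f ≠ g)
    (Z c000 c100 c010 c001 c110 c101 c011 c111 : MvPolynomial (Fin m) ℝ)
    (he000 : degreeOf e c000 = 0) (hf000 : degreeOf f c000 = 0) (hg000 : degreeOf g c000 = 0)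
    (he100 : degreeOf e c100 = 0) (hf100 : degreeOf f c100 = 0) (hg100 : degreeOf g c100 = 0)
    (he010 : degreeOf e c010 = 0) (hf010 : degreeOf f c010 = 0) (hg010 : degreeOf g c010 = 0)
    (he001 : degreeOf e c001 = 0) (hf001 : degreeOf f c001 = 0) (hg001 : degreeOf g c001 = 0)
    (he110 : degreeOf e c110 = 0) (hf110 : degreeOf f c110 = 0) (hg110 : degreeOf g c110 = 0)
    (he101 : degreeOf e c101 = 0) (hf101 : degreeOf f c101 = 0) (hg101 : degreeOf g c101 = 0)
    (he011 : degreeOf e c011 = 0) (hf011 : degreeOf f c011 = 0) (hg011 : degreeOf g c011 = 0)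
    (he111 : degreeOf e c111 = 0) (hf111 : degreeOf f c111 = 0) (hg111 : degreeOf g c111 = 0)
    (hZ : Z = ((c000 + X e * c100) + X f * (c010 + X e * c110))
        + X g * ((c001 + X e * c101) + X f * (c011 + X e * c111))) :
    ∃ A C : MvPolynomial (Fin m) ℝ, A.degreeOf g = 0 ∧ C.degreeOf g = 0 ∧
      Ray e f Z = A * X g ^ 2 +
        (del f (del g (pderiv e Z)) * del e (pderiv f (pderiv g Z))
          + del e (del g (pderiv f Z)) * del f (pderiv e (pderiv g Z))
          - del e (del f (pderiv g Z)) * del g (pderiv e (pderiv f Z))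
          - pderiv e (pderiv f (pderiv g Z)) * del e (del f (del g Z))) * X g + C := by
  subst hZ
  have hXe : degreeOf g (X e : MvPolynomial (Fin m) ℝ) = 0 := deg0_X heg
  have hXf : degreeOf g (X f : MvPolynomial (Fin m) ℝ) = 0 := deg0_X hfg
  refine ⟨(c101 + X f * c111) * (c011 + X e * c111)
      - c111 * ((c001 + X e * c101) + X f * (c011 + X e * c111)),
    (c100 + X f * c110) * (c010 + X e * c110)
      - c110 * ((c000 + X e * c100) + X f * (c010 + X e * c110)), ?_, ?_, ?_⟩
  · exact deg0_sub (deg0_mul (deg0_add hg101 (deg0_mul hXf hg111))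
      (deg0_add hg011 (deg0_mul hXe hg111)))
      (deg0_mul hg111 (deg0_add (deg0_add hg001 (deg0_mul hXe hg101))
        (deg0_mul hXf (deg0_add hg011 (deg0_mul hXe hg111)))))
  · exact deg0_sub (deg0_mul (deg0_add hg100 (deg0_mul hXf hg110))
      (deg0_add hg010 (deg0_mul hXe hg110)))
      (deg0_mul hg110 (deg0_add (deg0_add hg000 (deg0_mul hXe hg100))
        (deg0_mul hXf (deg0_add hg010 (deg0_mul hXe hg110)))))
  · rw [Ray]
    simp only [map_add, pderiv_mul, pderiv_X_self,
      pderiv_X_of_ne hef, pderiv_X_of_ne hef.symm, pderiv_X_of_ne heg,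
      pderiv_X_of_ne heg.symm, pderiv_X_of_ne hfg, pderiv_X_of_ne hfg.symm,
      pderiv_eq_zero he000, pderiv_eq_zero hf000, pderiv_eq_zero hg000,
      pderiv_eq_zero he100, pderiv_eq_zero hf100, pderiv_eq_zero hg100,
      pderiv_eq_zero he010, pderiv_eq_zero hf010, pderiv_eq_zero hg010,
      pderiv_eq_zero he001, pderiv_eq_zero hf001, pderiv_eq_zero hg001,
      pderiv_eq_zero he110, pderiv_eq_zero hf110, pderiv_eq_zero hg110,
      pderiv_eq_zero he101, pderiv_eq_zero hf101, pderiv_eq_zero hg101,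
      pderiv_eq_zero he011, pderiv_eq_zero hf011, pderiv_eq_zero hg011,
      pderiv_eq_zero he111, pderiv_eq_zero hf111, pderiv_eq_zero hg111,
      mul_zero, zero_mul, add_zero, zero_add, mul_one, one_mul,
      del_add, del_mul, del_X_self,
      del_X_of_ne hef, del_X_of_ne hef.symm, del_X_of_ne heg,
      del_X_of_ne heg.symm, del_X_of_ne hfg, del_X_of_ne hfg.symm,
      del_eq_self he000, del_eq_self hf000, del_eq_self hg000,
      del_eq_self he100, del_eq_self hf100, del_eq_self hg100,
      del_eq_self he010, del_eq_self hf010, del_eq_self hg010,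
      del_eq_self he001, del_eq_self hf001, del_eq_self hg001,
      del_eq_self he110, del_eq_self hf110, del_eq_self hg110,
      del_eq_self he101, del_eq_self hf101, del_eq_self hg101,
      del_eq_self he011, del_eq_self hf011, del_eq_self hg011,
      del_eq_self he111, del_eq_self hf111, del_eq_self hg111]
    ring

lemma deg0_del {i g : Fin m} {W : MvPolynomial (Fin m) ℝ} (h : degreeOf i W = 0) :
    degreeOf i (del g W) = 0 :=
  Nat.le_zero.mp (h ▸ degreeOf_del_le i g W)

lemma deg0_pderiv {i g : Fin m} {W : MvPolynomial (Fin m) ℝ} (h : degreeOf i W = 0) :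
    degreeOf i (pderiv g W) = 0 :=
  Nat.le_zero.mp (h ▸ degreeOf_pderiv_le i g W)

end RayAux

theorem rayleigh_quadratic_middle_coefficient {m : ℕ} (Z : MvPolynomial (Fin m) ℝ)
    (hZ : Multiaffine Z) (e f g : Fin m)
    (hef : e ≠ f) (heg : e ≠ g) (hfg : f ≠ g) :
    ∃ A C : MvPolynomial (Fin m) ℝ, A.degreeOf g = 0 ∧ C.degreeOf g = 0 ∧
      Ray e f Z = A * X g ^ 2 +
        (del f (del g (pderiv e Z)) * del e (pderiv f (pderiv g Z))
          + del e (del g (pderiv f Z)) * del f (pderiv e (pderiv g Z))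
          - del e (del f (pderiv g Z)) * del g (pderiv e (pderiv f Z))
          - pderiv e (pderiv f (pderiv g Z)) * del e (del f (del g Z))) * X g + C := by
  classical
  open RayAux in
  -- level 1 degree facts
  have hD1f : degreeOf f (del g Z) ≤ 1 := le_trans (degreeOf_del_le f g Z) (hZ f)
  have hD1e : degreeOf e (del g Z) ≤ 1 := le_trans (degreeOf_del_le e g Z) (hZ e)
  have hP1f : degreeOf f (pderiv g Z) ≤ 1 := le_trans (degreeOf_pderiv_le f g Z) (hZ f)
  have hP1e : degreeOf e (pderiv g Z) ≤ 1 := le_trans (degreeOf_pderiv_le e g Z) (hZ e)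
  have hD1g : degreeOf g (del g Z) = 0 := degreeOf_del_self g Z
  have hP1g : degreeOf g (pderiv g Z) = 0 := degreeOf_pderiv_self (hZ g)
  -- level 2
  have hQaf : degreeOf f (del f (del g Z)) = 0 := degreeOf_del_self f _
  have hQag : degreeOf g (del f (del g Z)) = 0 := deg0_del hD1g
  have hQae : degreeOf e (del f (del g Z)) ≤ 1 := le_trans (degreeOf_del_le e f _) hD1e
  have hPaf : degreeOf f (pderiv f (del g Z)) = 0 := degreeOf_pderiv_self hD1f
  have hPag : degreeOf g (pderiv f (del g Z)) = 0 := deg0_pderiv hD1g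
  have hPae : degreeOf e (pderiv f (del g Z)) ≤ 1 := le_trans (degreeOf_pderiv_le e f _) hD1e
  have hQbf : degreeOf f (del f (pderiv g Z)) = 0 := degreeOf_del_self f _
  have hQbg : degreeOf g (del f (pderiv g Z)) = 0 := deg0_del hP1g
  have hQbe : degreeOf e (del f (pderiv g Z)) ≤ 1 := le_trans (degreeOf_del_le e f _) hP1e
  have hPbf : degreeOf f (pderiv f (pderiv g Z)) = 0 := degreeOf_pderiv_self hP1f
  have hPbg : degreeOf g (pderiv f (pderiv g Z)) = 0 := deg0_pderiv hP1g
  have hPbe : degreeOf e (pderiv f (pderiv g Z)) ≤ 1 := le_trans (degreeOf_pderiv_le e f _) hP1e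
  -- decompositions
  have h1 : Z = del g Z + X g * pderiv g Z := decomp (hZ g)
  have h2 : del g Z = del f (del g Z) + X f * pderiv f (del g Z) := decomp hD1f
  have h3 : pderiv g Z = del f (pderiv g Z) + X f * pderiv f (pderiv g Z) := decomp hP1f
  have h4 : del f (del g Z) = del e (del f (del g Z)) + X e * pderiv e (del f (del g Z)) :=
    decomp hQae
  have h5 : pderiv f (del g Z)
      = del e (pderiv f (del g Z)) + X e * pderiv e (pderiv f (del g Z)) := decomp hPae
  have h6 : del f (pderiv g Z)
      = del e (del f (pderiv g Z)) + X e * pderiv e (del f (pderiv g Z)) := decomp hQbe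
  have h7 : pderiv f (pderiv g Z)
      = del e (pderiv f (pderiv g Z)) + X e * pderiv e (pderiv f (pderiv g Z)) := decomp hPbe
  refine RayAux.key e f g hef heg hfg Z
    (del e (del f (del g Z))) (pderiv e (del f (del g Z)))
    (del e (pderiv f (del g Z))) (del e (del f (pderiv g Z)))
    (pderiv e (pderiv f (del g Z))) (pderiv e (del f (pderiv g Z)))
    (del e (pderiv f (pderiv g Z))) (pderiv e (pderiv f (pderiv g Z)))
    (degreeOf_del_self e _) (deg0_del hQaf) (deg0_del hQag)
    (degreeOf_pderiv_self hQae) (deg0_pderiv hQaf) (deg0_pderiv hQag)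
    (degreeOf_del_self e _) (deg0_del hPaf) (deg0_del hPag)
    (degreeOf_del_self e _) (deg0_del hQbf) (deg0_del hQbg)
    (degreeOf_pderiv_self hPae) (deg0_pderiv hPaf) (deg0_pderiv hPag)
    (degreeOf_pderiv_self hQbe) (deg0_pderiv hQbf) (deg0_pderiv hQbg)
    (degreeOf_del_self e _) (deg0_del hPbf) (deg0_del hPbg)
    (degreeOf_pderiv_self hPbe) (deg0_pderiv hPbf) (deg0_pderiv hPbg)
    ?_
  rw [← h4, ← h5, ← h6, ← h7, ← h2, ← h3]
  exact h1
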